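/- arXiv:2504.03644 — 3 statements merged into one kernel-verified Lean document; each statement's English description precedes it below -/
import Mathlib

section
/- Let R be a finite commutative ring with identity. If quantum fractional revival occurs in the unitary Cayley graph G_R from a vertex u to a vertex v at some time, then for every spectral decomposition (θ_1, …, θ_K; P_1, …, P_K) of the adjacency matrix of G_R and every r ∈ {1, …, K}, either P_r e_v = P_r e_u or P_r e_v = −P_r e_u. -/
open Matrix

/-- The standard basis vector `e_u` in `ℂ^V`. -/
noncomputable def stdVec {V : Type*} (u : V) : V → ℂ :=
  letI := Classical.decEq V
  Pi.single u 1

/-- The transition matrix `H(t) = exp(i t A)` of a graph with adjacency matrix `A`. -/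
noncomputable def transMatrix {V : Type*} [Fintype V] (A : Matrix V V ℂ) (t : ℝ) :
    Matrix V V ℂ :=
  letI := Classical.decEq V
  NormedSpace.exp ((Complex.I * (t : ℂ)) • A)

/-- Quantum fractional revival from `u` to `v` at time `t`. -/
def hasQFR {V : Type*} [Fintype V] (A : Matrix V V ℂ) (u v : V) (t : ℝ) : Prop :=
  u ≠ v ∧ ∃ α β : ℂ, β ≠ 0 ∧
    (transMatrix A t) *ᵥ stdVec u = α • stdVec u + β • stdVec v

/-- The unitary Cayley graph of a commutative ring: distinct `a, b` are adjacent
iff `a - b` is a unit. -/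
def unitaryCayleyGraph (R : Type*) [CommRing R] : SimpleGraph R where
  Adj a b := a ≠ b ∧ IsUnit (a - b)
  symm := by
    constructor
    rintro a b ⟨h1, h2⟩
    refine ⟨h1.symm, ?_⟩
    rw [← neg_sub]
    exact h2.neg
  loopless := ⟨fun a h => h.1 rfl⟩

/-- The adjacency matrix (over `ℂ`) of the unitary Cayley graph of `R`. -/
noncomputable def ucMatrix (R : Type*) [CommRing R] : Matrix R R ℂ :=
  letI := Classical.decEq R
  letI := Classical.decRel (unitaryCayleyGraph R).Adj
  (unitaryCayleyGraph R).adjMatrix ℂ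

/-- The adjacency matrix (over `ℂ`) of a simple graph. -/
noncomputable def adjMat {V : Type*} (G : SimpleGraph V) : Matrix V V ℂ :=
  letI := Classical.decEq V
  letI := Classical.decRel G.Adj
  G.adjMatrix ℂ

section Helpers

variable {R : Type*} [CommRing R] [Fintype R] [DecidableEq R]

lemma stdVec_eq {V : Type*} [DecidableEq V] (u : V) :
    stdVec u = fun x => if x = u then (1 : ℂ) else 0 := by
  funext x
  simp [stdVec, Pi.single_apply]

lemma ucMatrix_apply (x y : R) :
    ucMatrix R x y = if x ≠ y ∧ IsUnit (x - y) then 1 else 0 := by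
  classical
  simp only [ucMatrix, SimpleGraph.adjMatrix]
  change (if (unitaryCayleyGraph R).Adj x y then (1:ℂ) else 0) = _
  congr 1

/-- The "flip" permutation matrix `x ↦ u + v - x`. -/
noncomputable def flipMat (u v : R) : Matrix R R ℂ :=
  Matrix.of fun x y => if x + y = u + v then 1 else 0

lemma flipMat_mul (u v : R) (M : Matrix R R ℂ) :
    flipMat u v * M = Matrix.of fun x z => M (u + v - x) z := by
  funext x z
  simp only [Matrix.mul_apply, flipMat, Matrix.of_apply, ite_mul, one_mul, zero_mul]
  rw [Finset.sum_eq_single (u + v - x)]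
  · simp
  · intro y _ hy
    rw [if_neg]
    intro h
    exact hy (by linear_combination h - x)
  · simp

lemma mul_flipMat (u v : R) (M : Matrix R R ℂ) :
    M * flipMat u v = Matrix.of fun x z => M x (u + v - z) := by
  funext x z
  simp only [Matrix.mul_apply, flipMat, Matrix.of_apply, mul_ite, mul_one, mul_zero]
  rw [Finset.sum_eq_single (u + v - z)]
  · simp
  · intro y _ hy
    rw [if_neg]
    intro h
    exact hy (by linear_combination h - z)
  · simp

lemma flipMat_mulVec (u v : R) (f : R → ℂ) :
    flipMat u v *ᵥ f = fun x => f (u + v - x) := by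
  funext x
  simp only [Matrix.mulVec, dotProduct, flipMat, Matrix.of_apply, ite_mul, one_mul, zero_mul]
  rw [Finset.sum_eq_single (u + v - x)]
  · simp
  · intro y _ hy
    rw [if_neg]
    intro h
    exact hy (by linear_combination h - x)
  · simp

lemma flipMat_mulVec_stdVec_left (u v : R) : flipMat u v *ᵥ stdVec u = stdVec v := by
  rw [flipMat_mulVec, stdVec_eq, stdVec_eq]
  funext x
  simp only
  by_cases hx : x = v
  · subst hx; simp
  · rw [if_neg hx, if_neg]
    intro hc
    exact hx (by linear_combination -hc)

lemma flipMat_mulVec_stdVec_right (u v : R) : flipMat u v *ᵥ stdVec v = stdVec u := by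
  rw [flipMat_mulVec, stdVec_eq, stdVec_eq]
  funext x
  simp only
  by_cases hx : x = u
  · subst hx; simp
  · rw [if_neg hx, if_neg]
    intro hc
    exact hx (by linear_combination -hc)

lemma flipMat_comm_ucMatrix (u v : R) :
    flipMat u v * ucMatrix R = ucMatrix R * flipMat u v := by
  rw [flipMat_mul, mul_flipMat]
  funext x z
  simp only [Matrix.of_apply, ucMatrix_apply]
  congr 1
  have h1 : (u + v - x = z) ↔ (x = u + v - z) := by
    constructor <;> intro h <;> linear_combination -h
  have h2 : IsUnit (u + v - x - z) ↔ IsUnit (x - (u + v - z)) := by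
    have : x - (u + v - z) = -(u + v - x - z) := by ring
    rw [this, IsUnit.neg_iff]
  rw [ne_eq, ne_eq, h1, h2]

lemma flipMat_mul_self (u v : R) : flipMat u v * flipMat u v = 1 := by
  rw [flipMat_mul]
  funext x z
  simp only [Matrix.of_apply, flipMat, Matrix.one_apply]
  by_cases hxz : x = z
  · subst hxz; simp
  · rw [if_neg hxz, if_neg]
    intro hc
    exact hxz (by linear_combination x + z - hc)

/-- Key spectral lemma: if `B * X = μ • B` then `B * exp X = exp μ • B`. -/
lemma mul_exp_eigen {n : Type*} [Fintype n] [DecidableEq n] (B X : Matrix n n ℂ) (μ : ℂ)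
    (h : B * X = μ • B) : B * NormedSpace.exp X = Complex.exp μ • B := by
  letI : SeminormedRing (Matrix n n ℂ) := Matrix.linftyOpSemiNormedRing
  letI : NormedRing (Matrix n n ℂ) := Matrix.linftyOpNormedRing
  letI : NormedAlgebra ℂ (Matrix n n ℂ) := Matrix.linftyOpNormedAlgebra
  have hpow : ∀ k : ℕ, B * X ^ k = μ ^ k • B := by
    intro k
    induction k with
    | zero => simp
    | succ k ih =>
      rw [pow_succ, ← mul_assoc, ih, smul_mul_assoc, h, smul_smul, pow_succ]
  have hs : Summable (fun k : ℕ => ((k.factorial : ℂ))⁻¹ • X ^ k) :=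
    NormedSpace.expSeries_summable' X
  rw [NormedSpace.exp_eq_tsum (𝕂 := ℂ), ← hs.tsum_mul_left B]
  have : ∀ k : ℕ, B * (((k.factorial : ℂ))⁻¹ • X ^ k)
      = (((k.factorial : ℂ))⁻¹ * μ ^ k) • B := by
    intro k
    rw [mul_smul_comm, hpow k, smul_smul]
  rw [tsum_congr this]
  have hsc : Summable (fun k : ℕ => ((k.factorial : ℂ))⁻¹ * μ ^ k) := by
    have := NormedSpace.expSeries_summable' (𝕂 := ℂ) μ
    simpa [smul_eq_mul] using this
  rw [Summable.tsum_smul_const hsc B]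
  congr 1
  rw [Complex.exp_eq_exp_ℂ, NormedSpace.exp_eq_tsum (𝕂 := ℂ)]
  simp [smul_eq_mul]

end Helpers

/-- over a finite commutative ring, QFR forces
`P_r e_v = ± P_r e_u` for every spectral projection. -/
theorem qfr_commutative_ring_plus_minus (R : Type*) [CommRing R]
    [Fintype R] [DecidableEq R]
    (u v : R) (t : ℝ) (h : hasQFR (ucMatrix R) u v t)
    (K : ℕ) (θ : Fin K → ℝ) (P : Fin K → Matrix R R ℂ)
    (hdist : Function.Injective θ)
    (hherm : ∀ r, (P r).IsHermitian)
    (horth : ∀ r s, r ≠ s → P r * P s = 0)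
    (hidem : ∀ r, P r * P r = P r)
    (hsum : ∑ r, P r = (1 : Matrix R R ℂ))
    (hspec : ∑ r, (θ r : ℂ) • P r = ucMatrix R) :
    ∀ r, P r *ᵥ stdVec v = P r *ᵥ stdVec u ∨
      P r *ᵥ stdVec v = -(P r *ᵥ stdVec u) := by
  intro s
  obtain ⟨huv, α, β, hβ, hH⟩ := h
  set A := ucMatrix R with hA
  set H := transMatrix A t with hHdef
  have hHexp : H = NormedSpace.exp ((Complex.I * (t : ℂ)) • A) := by
    rw [hHdef]; unfold transMatrix; congr!
  -- P s * A = θ s • P s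
  have hPA : P s * A = (θ s : ℂ) • P s := by
    rw [← hspec, Finset.mul_sum]
    rw [Finset.sum_eq_single s]
    · rw [mul_smul_comm, hidem s]
    · intro r _ hr
      rw [mul_smul_comm, horth s r (Ne.symm hr), smul_zero]
    · simp
  -- P s * H = exp(i t θ s) • P s
  have hPH : P s * H = Complex.exp (Complex.I * (t : ℂ) * (θ s : ℂ)) • P s := by
    rw [hHexp]
    apply mul_exp_eigen
    rw [mul_smul_comm, hPA, smul_smul]
  set E := Complex.exp (Complex.I * (t : ℂ) * (θ s : ℂ)) with hE
  set a := P s *ᵥ stdVec u with ha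
  set b := P s *ᵥ stdVec v with hb
  -- flip matrix
  have hQA : flipMat u v * A = A * flipMat u v := flipMat_comm_ucMatrix u v
  have hQH : flipMat u v * H = H * flipMat u v := by
    have hc : Commute (flipMat u v) ((Complex.I * (t : ℂ)) • A) :=
      (Commute.smul_right hQA _)
    rw [hHexp]
    exact hc.exp_right.eq
  -- H *ᵥ stdVec v = α • stdVec v + β • stdVec u
  have hHv : H *ᵥ stdVec v = α • stdVec v + β • stdVec u := by
    have h1 : H *ᵥ stdVec v = flipMat u v *ᵥ (H *ᵥ stdVec u) := by
      rw [Matrix.mulVec_mulVec, hQH, ← Matrix.mulVec_mulVec, flipMat_mulVec_stdVec_left]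
    rw [h1, hH, Matrix.mulVec_add, Matrix.mulVec_smul, Matrix.mulVec_smul,
      flipMat_mulVec_stdVec_left, flipMat_mulVec_stdVec_right]
  -- eigen-relations
  have eq1 : E • a = α • a + β • b := by
    have := congrArg (fun w => P s *ᵥ w) hH
    simpa [Matrix.mulVec_mulVec, Matrix.mulVec_add, Matrix.mulVec_smul, hPH,
      Matrix.smul_mulVec, ← ha, ← hb] using this
  have eq2 : E • b = α • b + β • a := by
    have := congrArg (fun w => P s *ᵥ w) hHv
    simpa [Matrix.mulVec_mulVec, Matrix.mulVec_add, Matrix.mulVec_smul, hPH,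
      Matrix.smul_mulVec, ← ha, ← hb] using this
  by_cases hsub : a - b = 0
  · left
    exact (sub_eq_zero.mp hsub).symm
  · by_cases hadd : a + b = 0
    · right
      exact eq_neg_of_add_eq_zero_right hadd
    · exfalso
      obtain ⟨x1, hx1⟩ := Function.ne_iff.mp hadd
      obtain ⟨x2, hx2⟩ := Function.ne_iff.mp hsub
      have e1 : E * (a x1 + b x1) = (α + β) * (a x1 + b x1) := by
        have h1 := congrFun eq1 x1
        have h2 := congrFun eq2 x1
        simp only [Pi.smul_apply, Pi.add_apply, smul_eq_mul] at h1 h2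
        linear_combination h1 + h2
      have e2 : E * (a x2 - b x2) = (α - β) * (a x2 - b x2) := by
        have h1 := congrFun eq1 x2
        have h2 := congrFun eq2 x2
        simp only [Pi.smul_apply, Pi.add_apply, smul_eq_mul] at h1 h2
        linear_combination h1 - h2
      have hx1' : a x1 + b x1 ≠ 0 := by simpa using hx1
      have hx2' : a x2 - b x2 ≠ 0 := by simpa using hx2
      have hE1 : E = α + β := mul_right_cancel₀ hx1' e1
      have hE2 : E = α - β := mul_right_cancel₀ hx2' e2
      apply hβ
      have hab : α + β = α - β := hE1.symm.trans hE2
      linear_combination hab / 2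
end

section
/- Let R_1, …, R_n be finite commutative local rings with identity, with unique maximal ideals M_1, …, M_n of cardinalities m_1, …, m_n respectively, and let R = R_1 × R_2 × ⋯ × R_n. If quantum fractional revival occurs in the unitary Cayley graph G_R from some vertex to another at some time, then m_1 · m_2 ⋯ m_n equals 1 or 2. -/
open Matrix
open scoped Nat
open scoped Classical

noncomputable def mulVecHom {V : Type*} [Fintype V] (x : V → ℂ) :
    Matrix V V ℂ →+ (V → ℂ) :=
  AddMonoidHom.mk' (fun N => N *ᵥ x) (fun N₁ N₂ => Matrix.add_mulVec N₁ N₂ x)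

lemma continuous_mulVecHom {V : Type*} [Fintype V] (x : V → ℂ) :
    Continuous (mulVecHom x) := by
  refine continuous_pi fun a => ?_
  simp only [mulVecHom, AddMonoidHom.mk'_apply, Matrix.mulVec, dotProduct]
  exact continuous_finset_sum _ fun b _ =>
    (((continuous_apply b).comp (continuous_apply a : Continuous fun N : Matrix V V ℂ => N a)).mul
      continuous_const)

lemma hasSum_exp_mulVec {V : Type*} [Fintype V] [DecidableEq V] (M : Matrix V V ℂ) (x : V → ℂ) :
    HasSum (fun k : ℕ => ((k ! : ℂ))⁻¹ • (M ^ k *ᵥ x)) (NormedSpace.exp M *ᵥ x) := by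
  letI : SeminormedRing (Matrix V V ℂ) := Matrix.linftyOpSemiNormedRing
  letI : NormedRing (Matrix V V ℂ) := Matrix.linftyOpNormedRing
  letI : NormedAlgebra ℂ (Matrix V V ℂ) := Matrix.linftyOpNormedAlgebra
  have hsum : HasSum (fun k : ℕ => ((k ! : ℂ))⁻¹ • M ^ k) (NormedSpace.exp M) := by
    rw [NormedSpace.exp_eq_tsum (𝕂 := ℂ)]
    exact (NormedSpace.expSeries_summable' (𝕂 := ℂ) M).hasSum
  have h2 := hsum.map (mulVecHom x) (continuous_mulVecHom x)
  simpa [mulVecHom, Function.comp_def, Matrix.smul_mulVec] using h2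

lemma exp_mulVec_of_mulVec_zero {V : Type*} [Fintype V] [DecidableEq V] (M : Matrix V V ℂ)
    (x : V → ℂ) (h : M *ᵥ x = 0) : NormedSpace.exp M *ᵥ x = x := by
  have hs := hasSum_exp_mulVec M x
  have h0 : ∀ k : ℕ, k ≠ 0 → ((k ! : ℂ))⁻¹ • (M ^ k *ᵥ x) = 0 := by
    intro k hk
    obtain ⟨j, rfl⟩ := Nat.exists_eq_succ_of_ne_zero hk
    rw [pow_succ, ← Matrix.mulVec_mulVec, h, Matrix.mulVec_zero, smul_zero]
  have h1 : HasSum (fun k : ℕ => ((k ! : ℂ))⁻¹ • (M ^ k *ᵥ x))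
      (((Nat.factorial 0 : ℂ))⁻¹ • (M ^ 0 *ᵥ x)) := hasSum_single 0 h0
  have := hs.unique h1
  simpa [Matrix.one_mulVec] using this

noncomputable def compHom {V : Type*} (τ : V → V) : (V → ℂ) →+ (V → ℂ) :=
  AddMonoidHom.mk' (fun y => y ∘ τ) (fun _ _ => rfl)

lemma exp_mulVec_comp {V : Type*} [Fintype V] [DecidableEq V] (M : Matrix V V ℂ) (τ : V → V)
    (hM : ∀ y : V → ℂ, M *ᵥ (y ∘ τ) = (M *ᵥ y) ∘ τ) (x : V → ℂ) :
    NormedSpace.exp M *ᵥ (x ∘ τ) = (NormedSpace.exp M *ᵥ x) ∘ τ := by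
  have hpow : ∀ (k : ℕ) (y : V → ℂ), M ^ k *ᵥ (y ∘ τ) = (M ^ k *ᵥ y) ∘ τ := by
    intro k
    induction k with
    | zero => intro y; simp [Matrix.one_mulVec]
    | succ k ih =>
      intro y
      rw [pow_succ, ← Matrix.mulVec_mulVec, ← Matrix.mulVec_mulVec, hM y, ih]
  have hψ : Continuous (compHom (V := V) τ) :=
    continuous_pi fun a => continuous_apply (τ a)
  have h2 := (hasSum_exp_mulVec M x).map (compHom τ) hψ
  have h3 : (⇑(compHom (V := V) τ) ∘ fun k : ℕ => ((k ! : ℂ))⁻¹ • (M ^ k *ᵥ x)) =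
      fun k : ℕ => ((k ! : ℂ))⁻¹ • (M ^ k *ᵥ (x ∘ τ)) := by
    funext k
    funext a
    simp [compHom, hpow k x]
  rw [h3] at h2
  exact (hasSum_exp_mulVec M (x ∘ τ)).unique h2

lemma pi_isUnit_iff {n : ℕ} {R : Fin n → Type*} [∀ i, CommRing (R i)] (r : ∀ i, R i) :
    IsUnit r ↔ ∀ i, IsUnit (r i) := by
  constructor
  · intro h i
    exact IsUnit.of_mul_eq_one _ (congrFun h.mul_val_inv i)
  · intro h
    exact IsUnit.of_mul_eq_one (fun i => ↑(h i).unit⁻¹) (funext fun i => (h i).mul_val_inv)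

lemma ucMatrix_apply_s8 {S : Type*} [CommRing S] [Fintype S] [Nontrivial S] (a b : S) :
    ucMatrix S a b = if IsUnit (a - b) then 1 else 0 := by
  classical
  have hAdj : (unitaryCayleyGraph S).Adj a b ↔ IsUnit (a - b) := by
    constructor
    · exact fun h => h.2
    · intro h
      refine ⟨fun e => ?_, h⟩
      rw [e, sub_self] at h
      exact not_isUnit_zero h
  simp only [ucMatrix, SimpleGraph.adjMatrix_apply]
  split_ifs with h1 h2
  · rfl
  · exact absurd (hAdj.mp h1) h2
  · next h3 => exact absurd (hAdj.mpr h3) h1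
  · rfl

lemma ucMatrix_shift {S : Type*} [CommRing S] [Fintype S] [Nontrivial S] (a b c : S) :
    ucMatrix S (a + c) (b + c) = ucMatrix S a b := by
  rw [ucMatrix_apply_s8, ucMatrix_apply_s8, add_sub_add_right_eq_sub]

lemma ucMatrix_mulVec_comp {S : Type*} [CommRing S] [Fintype S] [Nontrivial S]
    (c : S) (y : S → ℂ) :
    ucMatrix S *ᵥ (y ∘ fun a => a + c) = (ucMatrix S *ᵥ y) ∘ (fun a => a + c) := by
  funext a
  simp only [Function.comp, Matrix.mulVec, dotProduct]
  exact Fintype.sum_equiv (Equiv.addRight c) _ _ (fun b => by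
    simp only [Equiv.coe_addRight]
    rw [ucMatrix_shift])

lemma sum_gd_eq_zero {S : Type*} [CommRing S] [IsLocalRing S] [Fintype S] [DecidableEq S]
    (z : S) (hz : z ∈ IsLocalRing.maximalIdeal S) (s : S) :
    ∑ y : S, (if IsUnit (s - y) then
      ((if y = 0 then 1 else 0) - (if y = z then 1 else 0) : ℂ) else 0) = 0 := by
  have hiff : IsUnit s ↔ IsUnit (s - z) := by
    have h1 : s ∈ IsLocalRing.maximalIdeal S ↔ s - z ∈ IsLocalRing.maximalIdeal S :=
      ⟨fun h => Submodule.sub_mem _ h hz,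
       fun h => by simpa using Submodule.add_mem _ h hz⟩
    have h2 : ∀ w : S, w ∈ IsLocalRing.maximalIdeal S ↔ ¬ IsUnit w := fun w => by
      rw [IsLocalRing.mem_maximalIdeal, mem_nonunits_iff]
    rw [h2, h2] at h1
    exact not_iff_not.mp h1
  have hterm : ∀ y : S,
      (if IsUnit (s - y) then
        ((if y = 0 then 1 else 0) - (if y = z then 1 else 0) : ℂ) else 0)
      = (if y = 0 then (if IsUnit (s - y) then (1:ℂ) else 0) else 0)
        - (if y = z then (if IsUnit (s - y) then (1:ℂ) else 0) else 0) := by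
    intro y
    split_ifs <;> simp
  rw [Finset.sum_congr rfl (fun y _ => hterm y), Finset.sum_sub_distrib,
    Finset.sum_ite_eq' Finset.univ (0 : S), Finset.sum_ite_eq' Finset.univ z]
  simp [hiff]

lemma ucMatrix_mulVec_prod {n : ℕ} {R : Fin n → Type*} [∀ i, CommRing (R i)]
    [∀ i, Fintype (R i)] [Nontrivial (∀ i, R i)] (g : ∀ i, R i → ℂ) (a : ∀ i, R i) :
    (ucMatrix (∀ i, R i) *ᵥ fun r => ∏ i, g i (r i)) a
      = ∏ i, ∑ y : R i, (if IsUnit (a i - y) then g i y else 0) := by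
  classical
  rw [Finset.prod_univ_sum, Fintype.piFinset_univ]
  simp only [Matrix.mulVec, dotProduct]
  refine Finset.sum_congr rfl fun b _ => ?_
  rw [ucMatrix_apply_s8]
  by_cases h : IsUnit (a - b)
  · rw [if_pos h, one_mul]
    have h' := (pi_isUnit_iff _).mp h
    refine Finset.prod_congr rfl fun i _ => ?_
    rw [if_pos]
    exact h' i
  · rw [if_neg h, zero_mul]
    have h' : ¬ ∀ i, IsUnit (a i - b i) := by
      intro hall
      exact h ((pi_isUnit_iff _).mpr hall)
    push_neg at h'
    obtain ⟨i, hi⟩ := h'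
    exact (Finset.prod_eq_zero (Finset.mem_univ i) (show (if IsUnit (a i - b i) then g i (b i) else 0) = (0:ℂ) from if_neg hi)).symm

noncomputable def gd {S : Type*} [Zero S] (z : S) : S → ℂ :=
  fun y => (if y = 0 then 1 else 0) - (if y = z then 1 else 0)

lemma gd_zero {S : Type*} [Zero S] {z : S} (hz : z ≠ 0) : gd z 0 = 1 := by
  simp [gd, Ne.symm hz]

lemma gd_self {S : Type*} [Zero S] {z : S} (hz : z ≠ 0) : gd z z = -1 := by
  simp [gd, hz]

lemma gd_other {S : Type*} [Zero S] {z w : S} (hw0 : w ≠ 0) (hwz : w ≠ z) : gd z w = 0 := by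
  simp [gd, hw0, hwz]

lemma sum_gd_eq_zero' {S : Type*} [CommRing S] [IsLocalRing S] [Fintype S]
    (z : S) (hz : z ∈ IsLocalRing.maximalIdeal S) (s : S) :
    ∑ y : S, (if IsUnit (s - y) then gd z y else 0) = 0 := by
  classical
  simpa [gd] using sum_gd_eq_zero z hz s

lemma exists_single_kernel {n : ℕ} {R : Fin n → Type*} [∀ i, CommRing (R i)]
    [∀ i, IsLocalRing (R i)] [∀ i, Fintype (R i)] [Nontrivial (∀ i, R i)]
    (i₀ : Fin n) (z : R i₀) (hz : z ∈ IsLocalRing.maximalIdeal (R i₀)) :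
    ∃ x : (∀ i, R i) → ℂ, ucMatrix (∀ i, R i) *ᵥ x = 0 ∧ ∀ r, x r = gd z (r i₀) := by
  classical
  set g : ∀ i, R i → ℂ := Function.update (fun i (_ : R i) => (1:ℂ)) i₀ (gd z) with hg
  have hgi₀ : g i₀ = gd z := Function.update_self _ _ _
  refine ⟨fun r => ∏ i, g i (r i), ?_, ?_⟩
  · funext a
    rw [ucMatrix_mulVec_prod]
    simp only [Pi.zero_apply]
    refine Finset.prod_eq_zero (Finset.mem_univ i₀) ?_
    rw [hgi₀]
    exact sum_gd_eq_zero' z hz (a i₀)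
  · intro r
    calc ∏ i, g i (r i)
        = g i₀ (r i₀) * ∏ i ∈ Finset.univ.erase i₀, g i (r i) :=
          (Finset.mul_prod_erase _ _ (Finset.mem_univ i₀)).symm
      _ = gd z (r i₀) * 1 := by
          rw [hgi₀]
          congr 1
          refine Finset.prod_eq_one fun j hj => ?_
          rw [hg]
          rw [Function.update_of_ne (Finset.ne_of_mem_erase hj)]
      _ = gd z (r i₀) := mul_one _

lemma exists_double_kernel {n : ℕ} {R : Fin n → Type*} [∀ i, CommRing (R i)]
    [∀ i, IsLocalRing (R i)] [∀ i, Fintype (R i)] [Nontrivial (∀ i, R i)]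
    (i₀ j : Fin n) (hji : j ≠ i₀) (z : R i₀) (hz : z ∈ IsLocalRing.maximalIdeal (R i₀))
    (w : R j) :
    ∃ x : (∀ i, R i) → ℂ, ucMatrix (∀ i, R i) *ᵥ x = 0 ∧
      ∀ r, x r = gd z (r i₀) * gd w (r j) := by
  classical
  set g : ∀ i, R i → ℂ :=
    Function.update (Function.update (fun i (_ : R i) => (1:ℂ)) i₀ (gd z)) j (gd w) with hg
  have hgi₀ : g i₀ = gd z := by
    rw [hg, Function.update_of_ne (Ne.symm hji), Function.update_self]
  have hgj : g j = gd w := Function.update_self _ _ _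
  refine ⟨fun r => ∏ i, g i (r i), ?_, ?_⟩
  · funext a
    rw [ucMatrix_mulVec_prod]
    simp only [Pi.zero_apply]
    refine Finset.prod_eq_zero (Finset.mem_univ i₀) ?_
    rw [hgi₀]
    exact sum_gd_eq_zero' z hz (a i₀)
  · intro r
    calc ∏ i, g i (r i)
        = g j (r j) * ∏ i ∈ Finset.univ.erase j, g i (r i) :=
          (Finset.mul_prod_erase _ _ (Finset.mem_univ j)).symm
      _ = g j (r j) * (g i₀ (r i₀) * ∏ i ∈ (Finset.univ.erase j).erase i₀, g i (r i)) := by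
          rw [← Finset.mul_prod_erase (Finset.univ.erase j) (fun i => g i (r i))
            (Finset.mem_erase.mpr ⟨Ne.symm hji, Finset.mem_univ i₀⟩)]
      _ = gd z (r i₀) * gd w (r j) := by
          rw [hgi₀, hgj]
          have h1 : ∏ i ∈ (Finset.univ.erase j).erase i₀, g i (r i) = 1 := by
            refine Finset.prod_eq_one fun k hk => ?_
            have hk1 : k ≠ i₀ := (Finset.mem_erase.mp hk).1
            have hk2 : k ≠ j := (Finset.mem_erase.mp (Finset.mem_erase.mp hk).2).1
            rw [hg, Function.update_of_ne hk2, Function.update_of_ne hk1]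
          rw [h1, mul_one, mul_comm]


lemma ucMatrix_transpose (S : Type*) [CommRing S] [Fintype S] :
    (ucMatrix S)ᵀ = ucMatrix S := by
  letI := Classical.decEq S
  letI := Classical.decRel (unitaryCayleyGraph S).Adj
  exact ((unitaryCayleyGraph S).isSymm_adjMatrix)
set_option maxHeartbeats 1000000 in
/-- if QFR occurs in the unitary Cayley graph of a product of finite local
rings with maximal ideals of sizes `m_1, …, m_n`, then `m_1 ⋯ m_n = 1` or `2`. -/
theorem qfr_product_local_rings_maximal_ideal_card (n : ℕ) (R : Fin n → Type*)
    [∀ i, CommRing (R i)] [∀ i, IsLocalRing (R i)] [∀ i, Fintype (R i)]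
    (m : Fin n → ℕ)
    (hm : ∀ i, Nat.card (IsLocalRing.maximalIdeal (R i)) = m i)
    (h : ∃ u v t, hasQFR (ucMatrix (∀ i, R i)) u v t) :
    ∏ i, m i = 1 ∨ ∏ i, m i = 2 := by
  classical
  letI : DecidableEq (∀ i, R i) := Classical.decEq _
  obtain ⟨u, v, t, huv, α, β, hβ, hHu⟩ := h
  haveI hNT : Nontrivial (∀ i, R i) := ⟨⟨u, v, huv⟩⟩
  have hm1 : ∀ i, 1 ≤ m i := by
    intro i
    rw [← hm i]
    have : Nonempty ↥(IsLocalRing.maximalIdeal (R i)) := ⟨⟨0, Submodule.zero_mem _⟩⟩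
    exact Nat.card_pos
  by_contra hcon
  push_neg at hcon
  obtain ⟨hc1, hc2⟩ := hcon
  have hp1 : 1 ≤ ∏ i, m i := Finset.one_le_prod' fun i _ => hm1 i
  have h3 : 3 ≤ ∏ i, m i := by omega
  -- main objects
  obtain ⟨d, hd⟩ : ∃ d : ∀ i, R i, d = v - u := ⟨_, rfl⟩
  obtain ⟨A, hA⟩ : ∃ A : Matrix (∀ i, R i) (∀ i, R i) ℂ, A = ucMatrix (∀ i, R i) := ⟨_, rfl⟩
  obtain ⟨M, hM⟩ : ∃ M : Matrix (∀ i, R i) (∀ i, R i) ℂ,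
      M = (Complex.I * (t:ℂ)) • A := ⟨_, rfl⟩
  rw [← hA] at hHu
  have hTrans : transMatrix A t = NormedSpace.exp M := by
    rw [hM, hA]; rfl
  have hMcomp : ∀ (c : ∀ i, R i) (y : (∀ i, R i) → ℂ),
      M *ᵥ (y ∘ fun a => a + c) = (M *ᵥ y) ∘ (fun a => a + c) := by
    intro c y
    rw [hM, Matrix.smul_mulVec, Matrix.smul_mulVec, hA, ucMatrix_mulVec_comp]
    rfl
  have hstd : ∀ (p c : ∀ i, R i), stdVec p ∘ (fun a => a + c) = stdVec (p - c) := by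
    intro p c
    funext a
    simp [stdVec, Function.comp, Pi.single_apply, eq_sub_iff_add_eq]
  have hcol : ∀ w : ∀ i, R i,
      transMatrix A t *ᵥ stdVec w = α • stdVec w + β • stdVec (w + d) := by
    intro w
    have h1 : stdVec w = stdVec u ∘ (fun a => a + (u - w)) := by
      rw [hstd, sub_sub_cancel]
    rw [h1, hTrans, exp_mulVec_comp M _ (hMcomp (u - w)) (stdVec u), ← hTrans, hHu]
    have h2 : (α • stdVec u + β • stdVec v) ∘ (fun a => a + (u - w))
        = α • (stdVec u ∘ (fun a => a + (u - w))) + β • (stdVec v ∘ (fun a => a + (u - w))) :=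
      rfl
    rw [h2, hstd, hstd, sub_sub_cancel, show v - (u - w) = w + d from by rw [hd]; abel]
  have hHent : ∀ (b a : ∀ i, R i),
      transMatrix A t a b = α * stdVec b a + β * stdVec (b + d) a := by
    intro b a
    have h2 := congrFun (hcol b) a
    have h3' : (transMatrix A t *ᵥ stdVec b) a = transMatrix A t a b := by
      simp [stdVec, Matrix.mulVec_single]
    rw [h3'] at h2
    exact h2
  have hsymmH : transMatrix A t u v = transMatrix A t v u := by
    have hAs : Aᵀ = A := by
      rw [hA]; exact ucMatrix_transpose _
    have hMs : Mᵀ = M := by rw [hM, Matrix.transpose_smul, hAs]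
    have hHs : (transMatrix A t)ᵀ = transMatrix A t := by
      rw [hTrans, ← Matrix.exp_transpose, hMs]
    have h4 := congrFun (congrFun hHs v) u
    rwa [Matrix.transpose_apply] at h4
  have hβvu : transMatrix A t v u = β := by
    have h2 := congrFun hHu v
    have h3' : (transMatrix A t *ᵥ stdVec u) v = transMatrix A t v u := by
      simp [stdVec, Matrix.mulVec_single]
    rw [h3'] at h2
    rw [h2]
    simp [stdVec, Pi.single_apply, Ne.symm huv]
  have huvd : u = v + d := by
    by_contra hne
    have h2 := hHent v u
    rw [hsymmH, hβvu] at h2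
    have h5 : stdVec v u = 0 := by simp [stdVec, Pi.single_apply, huv]
    have h6 : stdVec (v + d) u = 0 := by simp [stdVec, Pi.single_apply, hne]
    rw [h5, h6] at h2
    simp at h2
    exact hβ h2
  have huvd' : u = v + (v - u) := by rw [← hd]; exact huvd
  have hdd : d + d = 0 := by rw [hd]; linear_combination huvd'.symm
  have hd0 : d ≠ 0 := by rw [hd]; exact sub_ne_zero_of_ne (Ne.symm huv)
  have hstar : ∀ x : (∀ i, R i) → ℂ, ucMatrix (∀ i, R i) *ᵥ x = 0 →
      ∀ a, x a = α * x a + β * x (a + d) := by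
    intro x hx a
    have hMx : M *ᵥ x = 0 := by
      rw [hM, Matrix.smul_mulVec, hA, hx, smul_zero]
    have hxfix : NormedSpace.exp M *ᵥ x = x := exp_mulVec_of_mulVec_zero M x hMx
    have h4 := congrFun hxfix a
    have h5 : (NormedSpace.exp M *ᵥ x) a = α * x a + β * x (a + d) := by
      rw [← hTrans]
      have hiffb : ∀ b : ∀ i, R i, (a = b + d) ↔ (b = a + d) := fun b =>
        ⟨fun h' => by rw [h', add_assoc, hdd, add_zero],
         fun h' => by rw [h', add_assoc, hdd, add_zero]⟩
      simp only [Matrix.mulVec, dotProduct]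
      calc ∑ b, transMatrix A t a b * x b
          = ∑ b, (α * ((if a = b then (1:ℂ) else 0) * x b)
              + β * ((if b = a + d then (1:ℂ) else 0) * x b)) := by
            refine Finset.sum_congr rfl fun b _ => ?_
            rw [hHent b a, if_congr (hiffb b).symm rfl rfl]
            simp only [stdVec, Pi.single_apply]
            ring
        _ = α * (∑ b, (if a = b then (1:ℂ) else 0) * x b)
            + β * (∑ b, (if b = a + d then (1:ℂ) else 0) * x b) := by
            rw [Finset.sum_add_distrib, Finset.mul_sum, Finset.mul_sum]
        _ = α * x a + β * x (a + d) := by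
            congr 1
            · congr 1
              calc ∑ b, (if a = b then (1:ℂ) else 0) * x b
                  = ∑ b, (if a = b then x b else 0) := by
                    refine Finset.sum_congr rfl fun b _ => ?_
                    simp only [ite_mul, one_mul, zero_mul]
                _ = x a := by rw [Finset.sum_ite_eq]; simp
            · congr 1
              calc ∑ b, (if b = a + d then (1:ℂ) else 0) * x b
                  = ∑ b, (if b = a + d then x b else 0) := by
                    refine Finset.sum_congr rfl fun b _ => ?_
                    simp only [ite_mul, one_mul, zero_mul]
                _ = x (a + d) := by rw [Finset.sum_ite_eq']; simp
    rw [h5] at h4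
    exact h4.symm
  -- cardinality helpers
  have hmem2 : ∀ i : Fin n, 2 ≤ m i →
      ∃ z ∈ IsLocalRing.maximalIdeal (R i), z ≠ 0 := by
    intro i h2
    have hnt : Nontrivial ↥(IsLocalRing.maximalIdeal (R i)) := by
      refine Finite.one_lt_card_iff_nontrivial.mp ?_
      rw [hm i]; omega
    obtain ⟨zz, hzz1, hzz2⟩ :=
      Submodule.exists_mem_ne_zero_of_ne_bot (Submodule.nontrivial_iff_ne_bot.mp hnt)
    exact ⟨zz, hzz1, hzz2⟩
  have hbound : ∀ (i : Fin n) (w : R i), w ≠ 0 →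
      (∀ z ∈ IsLocalRing.maximalIdeal (R i), z = 0 ∨ z = w) → m i ≤ 2 := by
    intro i w hw0 hall
    rw [← hm i]
    have hinj : Function.Injective
        (fun x : ↥(IsLocalRing.maximalIdeal (R i)) => decide ((x : R i) = w)) := by
      rintro ⟨x, hx⟩ ⟨y, hy⟩ hxy
      simp only [decide_eq_decide] at hxy
      apply Subtype.ext
      show x = y
      rcases hall x hx with hx1 | hx1 <;> rcases hall y hy with hy1 | hy1
      · rw [hx1, hy1]
      · exfalso; rw [hx1, hy1] at hxy; exact hw0 ((hxy.mpr rfl).symm)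
      · exfalso; rw [hx1, hy1] at hxy; exact hw0 ((hxy.mp rfl).symm)
      · rw [hx1, hy1]
    have h8 := Nat.card_le_card_of_injective _ hinj
    have h9 : Nat.card Bool = 2 := by simp [Nat.card_eq_fintype_card]
    omega
  obtain ⟨i₀, hi₀⟩ : ∃ i, 2 ≤ m i := by
    by_contra hno
    push_neg at hno
    have hle : ∏ i, m i ≤ 1 := by
      calc ∏ i, m i ≤ ∏ _i : Fin n, 1 :=
            Finset.prod_le_prod (fun i _ => Nat.zero_le _) (fun i _ => by have := hno i; omega)
        _ = 1 := Finset.prod_const_one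
    omega
  obtain ⟨z, hzM, hz0⟩ := hmem2 i₀ hi₀
  -- kernel vector helpers
  have hsingle : ∀ (i : Fin n) (z' : R i), z' ∈ IsLocalRing.maximalIdeal (R i) → z' ≠ 0 →
      ∃ x : (∀ i, R i) → ℂ, ucMatrix (∀ i, R i) *ᵥ x = 0 ∧ x 0 = 1 ∧ x d = gd z' (d i) := by
    intro i z' hm' hz'
    obtain ⟨x, hker, hval⟩ := exists_single_kernel i z' hm'
    refine ⟨x, hker, ?_, hval d⟩
    rw [hval]
    exact gd_zero hz'
  have hdouble : ∀ (i j : Fin n), j ≠ i → ∀ (z' : R i),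
      z' ∈ IsLocalRing.maximalIdeal (R i) → z' ≠ 0 → ∀ w : R j, w ≠ 0 →
      ∃ x : (∀ i, R i) → ℂ, ucMatrix (∀ i, R i) *ᵥ x = 0 ∧ x 0 = 1 ∧
        x d = gd z' (d i) * gd w (d j) := by
    intro i j hji z' hm' hz' w hw
    obtain ⟨x, hker, hval⟩ := exists_double_kernel i j hji z' hm' w
    refine ⟨x, hker, ?_, hval d⟩
    rw [hval]
    show gd z' 0 * gd w 0 = 1
    rw [gd_zero hz', gd_zero hw, one_mul]
  -- construct xX with x d ≠ 1
  obtain ⟨xX, hkX, hX0, hXd⟩ :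
      ∃ x : (∀ i, R i) → ℂ, ucMatrix (∀ i, R i) *ᵥ x = 0 ∧ x 0 = 1 ∧ x d ≠ 1 := by
    by_cases hD0 : d i₀ = 0
    · obtain ⟨j, hj⟩ := Function.ne_iff.mp hd0
      have hj' : d j ≠ 0 := by simpa using hj
      have hji : j ≠ i₀ := fun e => hj' (by rw [e, hD0])
      obtain ⟨x, hker, h0, hdv⟩ := hdouble i₀ j hji z hzM hz0 (d j) hj'
      refine ⟨x, hker, h0, ?_⟩
      rw [hdv, hD0, gd_zero hz0, one_mul, gd_self hj']
      norm_num
    · by_cases hDM : d i₀ ∈ IsLocalRing.maximalIdeal (R i₀)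
      · obtain ⟨x, hker, h0, hdv⟩ := hsingle i₀ (d i₀) hDM hD0
        refine ⟨x, hker, h0, ?_⟩
        rw [hdv, gd_self hD0]
        norm_num
      · obtain ⟨x, hker, h0, hdv⟩ := hsingle i₀ z hzM hz0
        refine ⟨x, hker, h0, ?_⟩
        have hdz : d i₀ ≠ z := fun e => hDM (e ▸ hzM)
        rw [hdv, gd_other hD0 hdz]
        norm_num
  -- construct xY with x d ≠ -1
  obtain ⟨xY, hkY, hY0, hYd⟩ :
      ∃ x : (∀ i, R i) → ℂ, ucMatrix (∀ i, R i) *ᵥ x = 0 ∧ x 0 = 1 ∧ x d ≠ -1 := by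
    by_cases hD0 : d i₀ = 0
    · obtain ⟨x, hker, h0, hdv⟩ := hsingle i₀ z hzM hz0
      refine ⟨x, hker, h0, ?_⟩
      rw [hdv, hD0, gd_zero hz0]
      norm_num
    · by_cases hDM : d i₀ ∈ IsLocalRing.maximalIdeal (R i₀)
      · by_cases hz3 : ∃ z' ∈ IsLocalRing.maximalIdeal (R i₀), z' ≠ 0 ∧ z' ≠ d i₀
        · obtain ⟨z', hz'M, hz'0, hz'd⟩ := hz3
          obtain ⟨x, hker, h0, hdv⟩ := hsingle i₀ z' hz'M hz'0
          refine ⟨x, hker, h0, ?_⟩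
          rw [hdv, gd_other hD0 (Ne.symm hz'd)]
          norm_num
        · push_neg at hz3
          have hall : ∀ z' ∈ IsLocalRing.maximalIdeal (R i₀), z' = 0 ∨ z' = d i₀ := by
            intro z' hz'
            by_cases h0' : z' = 0
            · exact Or.inl h0'
            · exact Or.inr (hz3 z' hz' h0')
          have hm2 : m i₀ ≤ 2 := hbound i₀ (d i₀) hD0 hall
          obtain ⟨j, hji, hmj⟩ : ∃ j, j ≠ i₀ ∧ 2 ≤ m j := by
            by_contra hno
            push_neg at hno
            have h7 : ∏ i ∈ Finset.univ.erase i₀, m i ≤ 1 :=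
              Finset.prod_le_one (fun k _ => Nat.zero_le _)
                (fun k hk => by have := hno k (Finset.ne_of_mem_erase hk); omega)
            have h8 : m i₀ * ∏ i ∈ Finset.univ.erase i₀, m i = ∏ i, m i :=
              Finset.mul_prod_erase _ _ (Finset.mem_univ i₀)
            have h9 := Nat.mul_le_mul hm2 h7
            omega
          obtain ⟨zj, hzjM, hzj0⟩ := hmem2 j hmj
          by_cases hDj : d j = 0
          · obtain ⟨x, hker, h0, hdv⟩ := hsingle j zj hzjM hzj0
            refine ⟨x, hker, h0, ?_⟩
            rw [hdv, hDj, gd_zero hzj0]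
            norm_num
          · obtain ⟨x, hker, h0, hdv⟩ := hdouble i₀ j hji (d i₀) hDM hD0 (d j) hDj
            refine ⟨x, hker, h0, ?_⟩
            rw [hdv, gd_self hD0, gd_self hDj]
            norm_num
      · obtain ⟨x, hker, h0, hdv⟩ := hsingle i₀ z hzM hz0
        refine ⟨x, hker, h0, ?_⟩
        have hdz : d i₀ ≠ z := fun e => hDM (e ▸ hzM)
        rw [hdv, gd_other hD0 hdz]
        norm_num
  -- final contradiction
  have eX1 := hstar xX hkX 0
  rw [zero_add, hX0] at eX1
  have eX2 := hstar xX hkX d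
  rw [hdd, hX0] at eX2
  have eY1 := hstar xY hkY 0
  rw [zero_add, hY0] at eY1
  have hXY : xX d = xY d := by
    have h9 : β * xX d = β * xY d := by linear_combination eY1 - eX1
    exact mul_left_cancel₀ hβ h9
  have hsq : xX d * xX d = 1 := by
    have e1 : β * xX d = 1 - α := by linear_combination -eX1
    have e2 : (1 - α) * xX d = β := by linear_combination eX2
    have h10 : β * (xX d * xX d) = β * 1 := by
      calc β * (xX d * xX d) = (β * xX d) * xX d := by ring
        _ = (1 - α) * xX d := by rw [e1]
        _ = β := e2
        _ = β * 1 := (mul_one β).symm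
    exact mul_left_cancel₀ hβ h10
  rcases mul_self_eq_one_iff.mp hsq with h1 | h1
  · exact hXd h1
  · rw [hXY] at h1
    exact hYd h1
end

section
/- Let F be a finite field of odd cardinality q. Then the unitary Cayley graph of the product ring F × ℤ/2ℤ has quantum fractional revival at time t = 2π/q; more precisely, for each a ∈ F, exp(i·(2π/q)·A)·e_{(a,0)} = cos(2π/q)·e_{(a,0)} − i·sin(2π/q)·e_{(a,1)}, where A is the adjacency matrix of the unitary Cayley graph of F × ℤ/2ℤ, and in particular this graph has QFR from (a,0) to (a,1) at time 2π/q. -/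
open Matrix
open scoped Nat

/-! ## auxiliary lemmas -/

lemma aux_exp_mulVec_eigen {n : Type*} [Fintype n] [DecidableEq n]
    (A : Matrix n n ℂ) (v : n → ℂ) (μ : ℂ) (h : A *ᵥ v = μ • v) :
    NormedSpace.exp A *ᵥ v = Complex.exp μ • v := by
  letI : SeminormedRing (Matrix n n ℂ) := Matrix.linftyOpSemiNormedRing
  letI : NormedRing (Matrix n n ℂ) := Matrix.linftyOpNormedRing
  letI : NormedAlgebra ℂ (Matrix n n ℂ) := Matrix.linftyOpNormedAlgebra
  have hpow : ∀ k : ℕ, A ^ k *ᵥ v = μ ^ k • v := by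
    intro k
    induction k with
    | zero => simp
    | succ k ih =>
      rw [pow_succ, ← Matrix.mulVec_mulVec, h, Matrix.mulVec_smul, ih, smul_smul, pow_succ]
      ring_nf
  let L : Matrix n n ℂ →ₗ[ℂ] (n → ℂ) :=
    { toFun := fun M => M *ᵥ v
      map_add' := fun M N => Matrix.add_mulVec M N v
      map_smul' := fun c M => Matrix.smul_mulVec c M v }
  have hsum : Summable fun k : ℕ => (k !⁻¹ : ℂ) • A ^ k :=
    NormedSpace.expSeries_summable' A
  have h1 : NormedSpace.exp A *ᵥ v = ∑' k : ℕ, ((k !⁻¹ : ℂ) • A ^ k) *ᵥ v := by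
    rw [NormedSpace.exp_eq_tsum ℂ]
    exact (L.toContinuousLinearMap.map_tsum hsum)
  rw [h1]
  have h2 : ∀ k : ℕ, ((k !⁻¹ : ℂ) • A ^ k) *ᵥ v = ((k !⁻¹ : ℂ) * μ ^ k) • v := by
    intro k
    rw [Matrix.smul_mulVec, hpow, smul_smul]
  simp_rw [h2]
  rw [Summable.tsum_smul_const]
  · congr 1
    have := congrFun Complex.exp_eq_exp_ℂ μ
    rw [this, NormedSpace.exp_eq_tsum ℂ]
    simp [smul_eq_mul]
  · simpa [smul_eq_mul] using NormedSpace.expSeries_summable' (𝕂 := ℂ) μ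

lemma aux_isUnit_prod {K L : Type*} [Field K] [Field L] (z : K × L) :
    IsUnit z ↔ z.1 ≠ 0 ∧ z.2 ≠ 0 := by
  constructor
  · intro h
    exact ⟨(h.map (MonoidHom.fst K L)).ne_zero, (h.map (MonoidHom.snd K L)).ne_zero⟩
  · rintro ⟨h1, h2⟩
    exact isUnit_iff_exists_inv.2
      ⟨(z.1⁻¹, z.2⁻¹), Prod.ext (mul_inv_cancel₀ h1) (mul_inv_cancel₀ h2)⟩

lemma aux_ucMatrix_apply {F : Type*} [Field F] [Fintype F] [DecidableEq F] (u v : F × ZMod 2) :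
    ucMatrix (F × ZMod 2) u v = if u.1 ≠ v.1 ∧ u.2 ≠ v.2 then 1 else 0 := by
  classical
  letI : DecidableEq (F × ZMod 2) := Classical.decEq (F × ZMod 2)
  haveI : Fact (Nat.Prime 2) := ⟨Nat.prime_two⟩
  rw [ucMatrix]
  rw [SimpleGraph.adjMatrix_apply]
  have hadj : (unitaryCayleyGraph (F × ZMod 2)).Adj u v ↔ (u.1 ≠ v.1 ∧ u.2 ≠ v.2) := by
    show (u ≠ v ∧ IsUnit (u - v)) ↔ _
    rw [aux_isUnit_prod]
    constructor
    · rintro ⟨-, h1, h2⟩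
      exact ⟨fun h => h1 (by simpa [sub_eq_zero] using h), fun h => h2 (by simpa [sub_eq_zero] using h)⟩
    · rintro ⟨h1, h2⟩
      refine ⟨fun h => h1 (by rw [h]), ?_, ?_⟩
      · simpa [sub_eq_zero] using h1
      · simpa [sub_eq_zero] using h2
  simp [hadj]

lemma aux_sum_zmod2 (g : ZMod 2 → ℂ) : ∑ y : ZMod 2, g y = g 0 + g 1 := by
  rw [show (Finset.univ : Finset (ZMod 2)) = {0, 1} by decide]
  rw [Finset.sum_pair (by decide)]

lemma aux_z01 : (0:ZMod 2) + 1 = 1 := by decide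
lemma aux_z10 : (1:ZMod 2) + 1 = 0 := by decide
lemma aux_zne : (0:ZMod 2) ≠ 1 := by decide
lemma aux_zne' : (1:ZMod 2) ≠ 0 := by decide
lemma aux_zcases (x : ZMod 2) : x = 0 ∨ x = 1 := by revert x; decide

/-- Eigenvector lemma for product-form vectors. -/
lemma aux_eigen {F : Type*} [Field F] [Fintype F] [DecidableEq F]
    (p : F → ℂ) (s : ZMod 2 → ℂ) (ε μ : ℂ)
    (hs : ∀ x : ZMod 2, s (x + 1) = ε * s x)
    (hp : ∀ b : F, (∑ c : F, p c) - p b = μ * p b)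
    (f : F × ZMod 2 → ℂ) (hf : ∀ z : F × ZMod 2, f z = p z.1 * s z.2) :
    ucMatrix (F × ZMod 2) *ᵥ f = (ε * μ) • f := by
  funext z
  obtain ⟨b, x⟩ := z
  show ∑ w : F × ZMod 2, ucMatrix (F × ZMod 2) (b, x) w * f w = ε * μ * f (b, x)
  simp only [hf]
  rw [Fintype.sum_prod_type]
  have key : ∀ c : F, ∑ y : ZMod 2, ucMatrix (F × ZMod 2) (b, x) (c, y) * (p c * s y)
      = if b = c then 0 else p c * s (x + 1) := by
    intro c
    simp_rw [aux_ucMatrix_apply]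
    rw [aux_sum_zmod2]
    by_cases hbc : b = c
    · simp [hbc]
    · have hx : x = 0 ∨ x = 1 := by
        revert x; decide
      rcases hx with rfl | rfl
      · simp [hbc, aux_zne,
          show ((0:ZMod 2)+1 = 1) from by decide]
      · simp [hbc, aux_zne',
          show ((1:ZMod 2)+1 = 0) from by decide]
  simp_rw [key]
  have h3 : ∀ c : F, (if b = c then (0:ℂ) else p c * s (x+1)) =
      p c * s (x+1) - (if b = c then p c * s (x+1) else 0) := by
    intro c; split <;> ring
  simp_rw [h3]
  rw [Finset.sum_sub_distrib, Finset.sum_ite_eq]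
  simp only [Finset.mem_univ, if_true, Pi.smul_apply, smul_eq_mul]
  rw [hs x, ← Finset.sum_mul]
  rw [eq_add_of_sub_eq (hp b)]
  ring

set_option maxHeartbeats 1000000 in
/-- for a finite field `F` of odd cardinality `q`, the unitary Cayley graph
of `F × ℤ/2` has QFR at time `2π/q`:
`H(2π/q) e_{(a,0)} = cos(2π/q) e_{(a,0)} - i sin(2π/q) e_{(a,1)}`. -/
theorem qfr_field_times_zmod_two (F : Type*) [Field F] [Fintype F] (q : ℕ)
    (hq : Fintype.card F = q) (hodd : Odd q) (a : F) :
    (transMatrix (ucMatrix (F × ZMod 2)) (2 * Real.pi / q)) *ᵥ stdVec (a, (0 : ZMod 2)) =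
        ((Real.cos (2 * Real.pi / q) : ℂ)) • stdVec (a, (0 : ZMod 2)) -
          (Complex.I * (Real.sin (2 * Real.pi / q) : ℂ)) • stdVec (a, (1 : ZMod 2)) ∧
      hasQFR (ucMatrix (F × ZMod 2)) (a, (0 : ZMod 2)) (a, (1 : ZMod 2))
        (2 * Real.pi / q) := by
  classical
  letI : DecidableEq (F × ZMod 2) := Classical.decEq (F × ZMod 2)
  haveI : Fact (Nat.Prime 2) := ⟨Nat.prime_two⟩
  have hq2 : 2 ≤ q := hq ▸ Fintype.one_lt_card
  have hq3 : 3 ≤ q := by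
    rcases hodd with ⟨k, hk⟩; omega
  have hqC : (q : ℂ) ≠ 0 := Nat.cast_ne_zero.2 (by omega)
  have hqR : (q : ℝ) ≠ 0 := Nat.cast_ne_zero.2 (by omega)
  set t : ℝ := 2 * Real.pi / q with ht
  set c : ℂ := Complex.I * (t : ℂ) with hc
  set A := ucMatrix (F × ZMod 2) with hA
  -- the four eigenvectors
  set f1 : F × ZMod 2 → ℂ := fun _ => 1 with hf1
  set f2 : F × ZMod 2 → ℂ := fun z => (if z.2 = 0 then (1:ℂ) else -1) with hf2
  set f3 : F × ZMod 2 → ℂ := fun z => (if z.1 = a then (1:ℂ) else 0) - (q:ℂ)⁻¹ with hf3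
  set f4 : F × ZMod 2 → ℂ :=
    fun z => ((if z.1 = a then (1:ℂ) else 0) - (q:ℂ)⁻¹) * (if z.2 = 0 then (1:ℂ) else -1)
    with hf4
  -- hypotheses on the `s` parts
  have hsχ : ∀ x : ZMod 2,
      (if x + 1 = 0 then (1:ℂ) else -1) = (-1) * (if x = 0 then (1:ℂ) else -1) := by
    intro x
    rcases aux_zcases x with rfl | rfl
    · simp [aux_z01, aux_zne']
    · simp [aux_z10]
  -- hypotheses on the `p` parts
  have hsum1 : (∑ _c : F, (1:ℂ)) = (q : ℂ) := by
    simp [Finset.card_univ, hq]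
  have hp1 : ∀ b : F, (∑ _c : F, (1:ℂ)) - 1 = ((q:ℂ) - 1) * 1 := by
    intro b; rw [hsum1]; ring
  have hsumw : (∑ c : F, ((if c = a then (1:ℂ) else 0) - (q:ℂ)⁻¹)) = 0 := by
    rw [Finset.sum_sub_distrib]
    rw [Finset.sum_ite_eq' Finset.univ a fun _ => (1:ℂ)]
    simp [Finset.card_univ, hq, hqC]
  have hpw : ∀ b : F, (∑ c : F, ((if c = a then (1:ℂ) else 0) - (q:ℂ)⁻¹)) -
      ((if b = a then (1:ℂ) else 0) - (q:ℂ)⁻¹) =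
      (-1) * ((if b = a then (1:ℂ) else 0) - (q:ℂ)⁻¹) := by
    intro b; rw [hsumw]; ring
  -- the four eigen-equations
  have hA1 : A *ᵥ f1 = (1 * ((q:ℂ) - 1)) • f1 :=
    aux_eigen (fun _ => (1:ℂ)) (fun _ => (1:ℂ)) 1 ((q:ℂ)-1)
      (fun x => by ring) hp1 f1 (fun z => by simp [hf1])
  have hA2 : A *ᵥ f2 = ((-1) * ((q:ℂ) - 1)) • f2 :=
    aux_eigen (fun _ => (1:ℂ)) (fun x => if x = 0 then (1:ℂ) else -1) (-1) ((q:ℂ)-1)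
      hsχ hp1 f2 (fun z => by simp [hf2])
  have hA3 : A *ᵥ f3 = ((1:ℂ) * (-1:ℂ)) • f3 :=
    aux_eigen (fun b => (if b = a then (1:ℂ) else 0) - (q:ℂ)⁻¹) (fun _ => (1:ℂ)) 1 (-1)
      (fun x => by ring) hpw f3 (fun z => by simp [hf3])
  have hA4 : A *ᵥ f4 = ((-1:ℂ) * (-1:ℂ)) • f4 :=
    aux_eigen (fun b => (if b = a then (1:ℂ) else 0) - (q:ℂ)⁻¹)
      (fun x => if x = 0 then (1:ℂ) else -1) (-1) (-1)
      hsχ hpw f4 (fun z => by simp [hf4])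
  -- exponential scalar computations
  have hcq : Complex.exp (c * (q:ℂ)) = 1 := by
    have harg : c * (q:ℂ) = 2 * (Real.pi : ℂ) * Complex.I := by
      rw [hc, ht]; push_cast; field_simp
    rw [harg, Complex.exp_two_pi_mul_I]
  set ep : ℂ := Complex.cos (t:ℂ) + Complex.sin (t:ℂ) * Complex.I with hep
  set em : ℂ := Complex.cos (t:ℂ) - Complex.sin (t:ℂ) * Complex.I with hem
  have hexpc : Complex.exp c = ep := by
    rw [hc, mul_comm, Complex.exp_mul_I, hep]
  have hexpnegc : Complex.exp (-c) = em := by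
    rw [show -c = (-(t:ℂ)) * Complex.I from by rw [hc]; ring,
      Complex.exp_mul_I, Complex.cos_neg, Complex.sin_neg, hem]; ring
  have he1 : Complex.exp (c * (1 * ((q:ℂ) - 1))) = em := by
    rw [show c * (1 * ((q:ℂ) - 1)) = c * (q:ℂ) + -c from by ring,
      Complex.exp_add, hcq, one_mul, hexpnegc]
  have he2 : Complex.exp (c * ((-1) * ((q:ℂ) - 1))) = ep := by
    rw [show c * ((-1) * ((q:ℂ) - 1)) = -(c * (q:ℂ)) + c from by ring,
      Complex.exp_add, Complex.exp_neg, hcq, hexpc]; simp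
  have he3 : Complex.exp (c * (1 * (-1))) = em := by
    rw [show c * (1 * (-1:ℂ)) = -c from by ring, hexpnegc]
  have he4 : Complex.exp (c * ((-1) * (-1:ℂ))) = ep := by
    rw [show c * ((-1) * (-1:ℂ)) = c from by ring, hexpc]
  -- transition matrix applied to eigenvectors
  have hT : ∀ (f : F × ZMod 2 → ℂ) (μ : ℂ), A *ᵥ f = μ • f →
      transMatrix A t *ᵥ f = Complex.exp (c * μ) • f := by
    intro f μ hf
    have h2 : (c • A) *ᵥ f = (c * μ) • f := by
      rw [Matrix.smul_mulVec, hf, smul_smul]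
    have htm : transMatrix A t = NormedSpace.exp (c • A) := by
      simp only [transMatrix, hc]
    rw [htm]
    exact aux_exp_mulVec_eigen (c • A) f (c * μ) h2
  have hT1 := (hT f1 _ hA1).trans (by rw [he1])
  have hT2 := (hT f2 _ hA2).trans (by rw [he2])
  have hT3 := (hT f3 _ hA3).trans (by rw [he3])
  have hT4 := (hT f4 _ hA4).trans (by rw [he4])
  -- decomposition of the standard basis vectors
  have hX : stdVec ((a, (0 : ZMod 2)) : F × ZMod 2) =
      (1/(2*(q:ℂ))) • f1 + (1/(2*(q:ℂ))) • f2 + (1/2 : ℂ) • f3 + (1/2 : ℂ) • f4 := by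
    funext z
    obtain ⟨b, x⟩ := z
    simp only [stdVec, Pi.single_apply, Pi.add_apply, Pi.smul_apply, smul_eq_mul,
      hf1, hf2, hf3, hf4, Prod.mk.injEq]
    rcases aux_zcases x with rfl | rfl <;> by_cases hb : b = a <;>
      simp [hb, aux_zne, aux_zne'] <;> (try field_simp) <;> (try ring)
  have hY : stdVec ((a, (1 : ZMod 2)) : F × ZMod 2) =
      (1/(2*(q:ℂ))) • f1 + (1/2 : ℂ) • f3 -
        ((1/(2*(q:ℂ))) • f2 + (1/2 : ℂ) • f4) := by
    funext z
    obtain ⟨b, x⟩ := z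
    simp only [stdVec, Pi.single_apply, Pi.add_apply, Pi.sub_apply, Pi.smul_apply, smul_eq_mul,
      hf1, hf2, hf3, hf4, Prod.mk.injEq]
    rcases aux_zcases x with rfl | rfl <;> by_cases hb : b = a <;>
      simp [hb, aux_zne, aux_zne'] <;> (try field_simp) <;> (try ring)
  -- the main computation
  have main : transMatrix A t *ᵥ stdVec ((a, (0 : ZMod 2)) : F × ZMod 2) =
      ((Real.cos t : ℂ)) • stdVec ((a, (0 : ZMod 2)) : F × ZMod 2) -
        (Complex.I * (Real.sin t : ℂ)) • stdVec ((a, (1 : ZMod 2)) : F × ZMod 2) := by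
    rw [hX, hY]
    simp only [Matrix.mulVec_add, Matrix.mulVec_smul, hT1, hT2, hT3, hT4,
      Complex.ofReal_cos, Complex.ofReal_sin, hep, hem]
    funext z
    simp only [Pi.add_apply, Pi.sub_apply, Pi.smul_apply, smul_eq_mul]
    ring
  refine ⟨main, ?_, ?_⟩
  · intro h
    exact (aux_zne) (congrArg Prod.snd h)
  · refine ⟨(Real.cos t : ℂ), -(Complex.I * (Real.sin t : ℂ)), ?_, ?_⟩
    · refine neg_ne_zero.2 (mul_ne_zero Complex.I_ne_zero ?_)
      rw [Complex.ofReal_ne_zero]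
      have hπ := Real.pi_pos
      have ht0 : 0 < t := by
        rw [ht]; positivity
      have htπ : t < Real.pi := by
        rw [ht, div_lt_iff₀ (by positivity : (0:ℝ) < (q:ℝ))]
        have : (3 : ℝ) ≤ (q : ℝ) := by exact_mod_cast hq3
        nlinarith
      exact ne_of_gt (Real.sin_pos_of_pos_of_lt_pi ht0 htπ)
    · rw [main, sub_eq_add_neg, ← neg_smul]
end
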